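/- Every cycle of length 5 in the crossing graph of K6 can be obtained, by applying a rotation x ↦ x+k (mod 6) or reflection x ↦ c−x (mod 6) of the vertex labels together with a cyclic rotation or reversal of the sequence, from one of the following three cyclic sequences of interior edges (ab denoting {a,b}): (13,24,35,46,25), (13,24,35,14,25), (13,24,36,14,25); and no two of these three are related by such symmetries. -/

import Mathlib

/-- The cyclic length of the chord joining vertices `a` and `b` of `K₆`,
whose vertices are labeled by `ZMod 6` in cyclic order around a circle. -/
def cycLen (a b : ZMod 6) : ℕ := min (b - a).val (a - b).val

/-- An interior edge of `K₆`: a 2-element set of vertices at cyclic distance at least 2. -/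
def InteriorEdge (e : Finset (ZMod 6)) : Prop :=
  e.card = 2 ∧ ∀ a ∈ e, ∀ b ∈ e, a ≠ b → 2 ≤ cycLen a b

/-- A short edge of `K₆`: a 2-element set of vertices at cyclic distance exactly 2. -/
def ShortEdge (e : Finset (ZMod 6)) : Prop :=
  e.card = 2 ∧ ∀ a ∈ e, ∀ b ∈ e, a ≠ b → cycLen a b = 2

/-- A long edge of `K₆`: a 2-element set of vertices at cyclic distance exactly 3. -/
def LongEdge (e : Finset (ZMod 6)) : Prop :=
  e.card = 2 ∧ ∀ a ∈ e, ∀ b ∈ e, a ≠ b → cycLen a b = 3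

/-- `x` lies in the open cyclic arc from `a` to `b` (in the cyclic order of labels). -/
def InArc (a b x : ZMod 6) : Prop := 0 < (x - a).val ∧ (x - a).val < (b - a).val

/-- Two chords `{a,b}` and `{c,d}` cross iff their endpoint sets are disjoint and
exactly one of `c`, `d` lies in the open cyclic arc from `a` to `b`. -/
def Crosses (e f : Finset (ZMod 6)) : Prop :=
  Disjoint e f ∧ ∃ a b c d : ZMod 6, a ≠ b ∧ c ≠ d ∧ e = {a, b} ∧ f = {c, d} ∧
    Xor' (InArc a b c) (InArc a b d)

def e13 : Finset (ZMod 6) := {1, 3}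
def e15 : Finset (ZMod 6) := {1, 5}
def e24 : Finset (ZMod 6) := {2, 4}
def e26 : Finset (ZMod 6) := {2, 6}
def e35 : Finset (ZMod 6) := {3, 5}
def e46 : Finset (ZMod 6) := {4, 6}
def e14 : Finset (ZMod 6) := {1, 4}
def e25 : Finset (ZMod 6) := {2, 5}
def e36 : Finset (ZMod 6) := {3, 6}

/-- A symmetry of the vertex labels: a rotation `x ↦ x + k` or a reflection
`x ↦ k - x` of `ZMod 6`. -/
def DihedralMap (φ : ZMod 6 → ZMod 6) : Prop :=
  (∃ k : ZMod 6, ∀ x, φ x = x + k) ∨ (∃ k : ZMod 6, ∀ x, φ x = k - x)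

/-- A symmetry of a cyclic sequence of length `s`: a cyclic rotation `i ↦ i + t`
or a reversal `i ↦ t - i` of the index set `ZMod s`. -/
def SeqSym {s : ℕ} (ψ : ZMod s → ZMod s) : Prop :=
  (∃ t : ZMod s, ∀ i, ψ i = i + t) ∨ (∃ t : ZMod s, ∀ i, ψ i = t - i)

/-- A cycle of length `s` in the crossing graph of `K₆`: a cyclic sequence of `s`
distinct interior edges, each crossing the next (cyclically). -/
def IsCycle {s : ℕ} (c : ZMod s → Finset (ZMod 6)) : Prop :=
  Function.Injective c ∧ (∀ i, InteriorEdge (c i)) ∧ (∀ i, Crosses (c i) (c (i + 1)))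

/-- `d` is obtained from `c` by applying a rotation or reflection of the vertex labels
together with a cyclic rotation or reversal of the sequence. -/
def ObtainedFrom {s : ℕ} (c d : ZMod s → Finset (ZMod 6)) : Prop :=
  ∃ (φ : ZMod 6 → ZMod 6) (ψ : ZMod s → ZMod s),
    DihedralMap φ ∧ SeqSym ψ ∧ ∀ i, d i = (c (ψ i)).image φ

def cyc5a : ZMod 5 → Finset (ZMod 6) := fun i => [e13, e24, e35, e46, e25].getD i.val ∅
def cyc5b : ZMod 5 → Finset (ZMod 6) := fun i => [e13, e24, e35, e14, e25].getD i.val ∅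
def cyc5c : ZMod 5 → Finset (ZMod 6) := fun i => [e13, e24, e36, e14, e25].getD i.val ∅


-- ===== auxiliary machinery =====

instance (a b x : ZMod 6) : Decidable (InArc a b x) := by unfold InArc; infer_instance
instance (e f : Finset (ZMod 6)) : Decidable (Crosses e f) := by unfold Crosses Xor'; infer_instance
instance (e : Finset (ZMod 6)) : Decidable (InteriorEdge e) := by unfold InteriorEdge; infer_instance

/-- The nine interior edges. -/
def Eg (j : Fin 9) : Finset (ZMod 6) := [e13, e15, e24, e26, e35, e46, e14, e25, e36].getD j.val ∅

def crossT : List Bool := [false, false, true, true, false, false, false, true, false, false, false, false, true, false, true, false, false, true, true, false, false, false, true, false, false, false, true, true, true, false, false, false, false, true, false, false, false, false, true, false, false, true, true, false, false, false, true, false, false, true, false, false, true, false, false, false, false, true, true, false, false, true, true, true, false, false, false, false, true, true, false, true, false, true, true, false, false, false, true, true, false]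

def cB (i j : Fin 9) : Bool := crossT.getD (i.val * 9 + j.val) false

def imgT : List (Fin 9) := [0, 1, 2, 3, 4, 5, 6, 7, 8, 2, 3, 4, 0, 5, 1, 7, 8, 6, 4, 0, 5, 2, 1, 3, 8, 6, 7, 5, 2, 1, 4, 3, 0, 6, 7, 8, 1, 4, 3, 5, 0, 2, 7, 8, 6, 3, 5, 0, 1, 2, 4, 8, 6, 7, 4, 1, 2, 5, 0, 3, 7, 6, 8, 5, 3, 4, 1, 2, 0, 8, 7, 6, 1, 0, 5, 3, 4, 2, 6, 8, 7, 3, 2, 1, 0, 5, 4, 7, 6, 8, 0, 4, 3, 2, 1, 5, 8, 7, 6, 2, 5, 0, 4, 3, 1, 6, 8, 7]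

def imgF (m : Fin 12) (j : Fin 9) : Fin 9 := imgT.getD (m.val * 9 + j.val) 0

def dmap (m : Fin 12) : ZMod 6 → ZMod 6 :=
  fun x => if m.val < 6 then x + (m.val : ZMod 6) else ((m.val - 6 : ℕ) : ZMod 6) - x

def aIx : ZMod 5 → Fin 9 := fun i => ([0, 2, 4, 5, 7] : List (Fin 9)).getD i.val 0
def bIx : ZMod 5 → Fin 9 := fun i => ([0, 2, 4, 6, 7] : List (Fin 9)).getD i.val 0
def cIx : ZMod 5 → Fin 9 := fun i => ([0, 2, 8, 6, 7] : List (Fin 9)).getD i.val 0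

def psiF (t : ZMod 5) (r : Bool) : ZMod 5 → ZMod 5 := fun i => if r then t - i else i + t

def Tmatch (base : ZMod 5 → Fin 9) (x0 x1 x2 x3 x4 : Fin 9) : Prop :=
  ∃ m : Fin 12, ∃ t : ZMod 5, ∃ r : Bool,
    x0 = imgF m (base (psiF t r 0)) ∧ x1 = imgF m (base (psiF t r 1)) ∧
    x2 = imgF m (base (psiF t r 2)) ∧ x3 = imgF m (base (psiF t r 3)) ∧
    x4 = imgF m (base (psiF t r 4))

instance (base x0 x1 x2 x3 x4) : Decidable (Tmatch base x0 x1 x2 x3 x4) := by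
  unfold Tmatch; infer_instance

lemma memL : ∀ e : Finset (ZMod 6), InteriorEdge e → ∃ j : Fin 9, e = Eg j := by decide

lemma crossB_of : ∀ i j : Fin 9, Crosses (Eg i) (Eg j) → cB i j = true := by decide

lemma imgE : ∀ m : Fin 12, ∀ j : Fin 9, (Eg j).image (dmap m) = Eg (imgF m j) := by decide

lemma baseA : ∀ i : ZMod 5, cyc5a i = Eg (aIx i) := by decide
lemma baseB : ∀ i : ZMod 5, cyc5b i = Eg (bIx i) := by decide
lemma baseC : ∀ i : ZMod 5, cyc5c i = Eg (cIx i) := by decide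

instance (φ : ZMod 6 → ZMod 6) : Decidable (DihedralMap φ) := by
  unfold DihedralMap; infer_instance

lemma dmapD : ∀ m : Fin 12, DihedralMap (dmap m) := by decide

lemma psiD (t : ZMod 5) (r : Bool) : SeqSym (psiF t r) := by
  cases r
  · exact Or.inl ⟨t, fun i => rfl⟩
  · exact Or.inr ⟨t, fun i => rfl⟩

lemma zmod5cases : ∀ i : ZMod 5, i = 0 ∨ i = 1 ∨ i = 2 ∨ i = 3 ∨ i = 4 := by decide

set_option maxHeartbeats 8000000 in
lemma key : ∀ x0 x1 x2 x3 x4 : Fin 9,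
    (cB x0 x1 = true ∧ cB x1 x2 = true ∧ cB x2 x3 = true ∧ cB x3 x4 = true ∧ cB x4 x0 = true ∧
     x0 ≠ x1 ∧ x0 ≠ x2 ∧ x0 ≠ x3 ∧ x0 ≠ x4 ∧ x1 ≠ x2 ∧ x1 ≠ x3 ∧ x1 ≠ x4 ∧
     x2 ≠ x3 ∧ x2 ≠ x4 ∧ x3 ≠ x4) →
    Tmatch aIx x0 x1 x2 x3 x4 ∨ Tmatch bIx x0 x1 x2 x3 x4 ∨ Tmatch cIx x0 x1 x2 x3 x4 := by
  decide

lemma build {base : ZMod 5 → Fin 9} {cyc c : ZMod 5 → Finset (ZMod 6)} {f : ZMod 5 → Fin 9}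
    (hbase : ∀ i, cyc i = Eg (base i)) (hf : ∀ i, c i = Eg (f i))
    (h : Tmatch base (f 0) (f 1) (f 2) (f 3) (f 4)) : ObtainedFrom cyc c := by
  obtain ⟨m, t, r, h0, h1, h2, h3, h4⟩ := h
  refine ⟨dmap m, psiF t r, dmapD m, psiD t r, fun i => ?_⟩
  have step : ∀ j : ZMod 5, f j = imgF m (base (psiF t r j)) →
      c j = (cyc (psiF t r j)).image (dmap m) := by
    intro j hj
    rw [hf j, hj, hbase, imgE]
  rcases zmod5cases i with rfl | rfl | rfl | rfl | rfl
  · exact step 0 h0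
  · exact step 1 h1
  · exact step 2 h2
  · exact step 3 h3
  · exact step 4 h4

lemma obt_iff (c d : ZMod 5 → Finset (ZMod 6)) : ObtainedFrom c d ↔
    ∃ k : ZMod 6, ∃ t : ZMod 5,
      (∀ i, d i = (c (i + t)).image (fun x => x + k)) ∨
      (∀ i, d i = (c (t - i)).image (fun x => x + k)) ∨
      (∀ i, d i = (c (i + t)).image (fun x => k - x)) ∨
      (∀ i, d i = (c (t - i)).image (fun x => k - x)) := by
  constructor
  · rintro ⟨φ, ψ, hφ, hψ, h⟩
    obtain ⟨k, hk⟩ | ⟨k, hk⟩ := hφ <;> obtain ⟨t, ht⟩ | ⟨t, ht⟩ := hψ <;> refine ⟨k, t, ?_⟩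
    · exact Or.inl (fun i => by rw [h i, ht i]; exact Finset.image_congr (fun x _ => hk x))
    · exact Or.inr (Or.inl (fun i => by
        rw [h i, ht i]; exact Finset.image_congr (fun x _ => hk x)))
    · exact Or.inr (Or.inr (Or.inl (fun i => by
        rw [h i, ht i]; exact Finset.image_congr (fun x _ => hk x))))
    · exact Or.inr (Or.inr (Or.inr (fun i => by
        rw [h i, ht i]; exact Finset.image_congr (fun x _ => hk x))))
  · rintro ⟨k, t, h | h | h | h⟩
    · exact ⟨fun x => x + k, fun i => i + t, Or.inl ⟨k, fun _ => rfl⟩,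
        Or.inl ⟨t, fun _ => rfl⟩, h⟩
    · exact ⟨fun x => x + k, fun i => t - i, Or.inl ⟨k, fun _ => rfl⟩,
        Or.inr ⟨t, fun _ => rfl⟩, h⟩
    · exact ⟨fun x => k - x, fun i => i + t, Or.inr ⟨k, fun _ => rfl⟩,
        Or.inl ⟨t, fun _ => rfl⟩, h⟩
    · exact ⟨fun x => k - x, fun i => t - i, Or.inr ⟨k, fun _ => rfl⟩,
        Or.inr ⟨t, fun _ => rfl⟩, h⟩

/-- Every cycle of length 5 in the crossing graph of `K₆` is obtained, via a rotation or
reflection of the vertex labels together with a cyclic rotation or reversal of the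
sequence, from one of `(13,24,35,46,25)`, `(13,24,35,14,25)`, `(13,24,36,14,25)`;
and no two of these three are related by such symmetries. -/
theorem stmt_15 :
    (∀ c : ZMod 5 → Finset (ZMod 6), IsCycle c →
      ObtainedFrom cyc5a c ∨ ObtainedFrom cyc5b c ∨ ObtainedFrom cyc5c c) ∧
    ¬ ObtainedFrom cyc5a cyc5b ∧ ¬ ObtainedFrom cyc5b cyc5a ∧
    ¬ ObtainedFrom cyc5a cyc5c ∧ ¬ ObtainedFrom cyc5c cyc5a ∧
    ¬ ObtainedFrom cyc5b cyc5c ∧ ¬ ObtainedFrom cyc5c cyc5b := by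
  refine ⟨?_, ?_, ?_, ?_, ?_, ?_, ?_⟩
  · intro c hc
    obtain ⟨hinj, hint, hcr⟩ := hc
    choose f hf using fun i => memL (c i) (hint i)
    have finj : ∀ i j : ZMod 5, f i = f j → i = j := by
      intro i j h
      exact hinj (by rw [hf i, hf j, h])
    have hcr' : ∀ i : ZMod 5, cB (f i) (f (i + 1)) = true := by
      intro i
      exact crossB_of _ _ (by rw [← hf, ← hf]; exact hcr i)
    have h01 := hcr' 0; rw [show ((0 : ZMod 5) + 1) = 1 from by decide] at h01
    have h12 := hcr' 1; rw [show ((1 : ZMod 5) + 1) = 2 from by decide] at h12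
    have h23 := hcr' 2; rw [show ((2 : ZMod 5) + 1) = 3 from by decide] at h23
    have h34 := hcr' 3; rw [show ((3 : ZMod 5) + 1) = 4 from by decide] at h34
    have h40 := hcr' 4; rw [show ((4 : ZMod 5) + 1) = 0 from by decide] at h40
    have ne : ∀ i j : ZMod 5, i ≠ j → f i ≠ f j := fun i j hij h => hij (finj i j h)
    have := key (f 0) (f 1) (f 2) (f 3) (f 4)
      ⟨h01, h12, h23, h34, h40,
       ne 0 1 (by decide), ne 0 2 (by decide), ne 0 3 (by decide), ne 0 4 (by decide),
       ne 1 2 (by decide), ne 1 3 (by decide), ne 1 4 (by decide),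
       ne 2 3 (by decide), ne 2 4 (by decide), ne 3 4 (by decide)⟩
    rcases this with h | h | h
    · exact Or.inl (build baseA hf h)
    · exact Or.inr (Or.inl (build baseB hf h))
    · exact Or.inr (Or.inr (build baseC hf h))
  · rw [obt_iff]; decide
  · rw [obt_iff]; decide
  · rw [obt_iff]; decide
  · rw [obt_iff]; decide
  · rw [obt_iff]; decide
  · rw [obt_iff]; decide
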